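/- arXiv:1509.04917 — 6 statements merged into one kernel-verified Lean document; each statement's English description precedes it below -/
import Mathlib

section
/- Let β > 0 and let Y₁, Y₂ : [0, τ) → (0, ∞) be C¹ solutions of Ẏ₁ = −2 Y₁^(−β) + Y₂^(−β) + F₁ and Ẏ₂ = −2 Y₂^(−β) + Y₁^(−β) + F₂, with continuous F₁, F₂ satisfying |F₁(t)| + |F₂(t)| ≤ η for all t, initial data Y₁(0) = A₁, Y₂(0) = A₂ with 1/2 ≤ A₁, A₂ ≤ 2, and η < 4^(−β)/2. Then Y₁(t) + Y₂(t) ≤ 4 for all t ∈ [0, τ) and (Y₁ + Y₂)(t)^(β+1) ≤ (A₁ + A₂)^(β+1) − (β+1)t/2, so τ is finite with τ ≤ 2·4^(β+1)/(β+1). -/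
theorem stmt6 (β τ A₁ A₂ η : ℝ) (hβ : 0 < β) (hτ : 0 < τ)
    (Y₁ Y₂ F₁ F₂ : ℝ → ℝ)
    (hF₁ : Continuous F₁) (hF₂ : Continuous F₂)
    (hη : ∀ t, |F₁ t| + |F₂ t| ≤ η)
    (hA₁ : 1 / 2 ≤ A₁) (hA₁' : A₁ ≤ 2) (hA₂ : 1 / 2 ≤ A₂) (hA₂' : A₂ ≤ 2)
    (hηsmall : η < (4 : ℝ) ^ (-β) / 2)
    (hY₁0 : Y₁ 0 = A₁) (hY₂0 : Y₂ 0 = A₂)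
    (hpos : ∀ t ∈ Set.Ico (0 : ℝ) τ, 0 < Y₁ t ∧ 0 < Y₂ t)
    (heq₁ : ∀ t ∈ Set.Ico (0 : ℝ) τ,
      HasDerivAt Y₁ (-2 * (Y₁ t) ^ (-β) + (Y₂ t) ^ (-β) + F₁ t) t)
    (heq₂ : ∀ t ∈ Set.Ico (0 : ℝ) τ,
      HasDerivAt Y₂ (-2 * (Y₂ t) ^ (-β) + (Y₁ t) ^ (-β) + F₂ t) t) :
    (∀ t ∈ Set.Ico (0 : ℝ) τ, Y₁ t + Y₂ t ≤ 4 ∧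
      (Y₁ t + Y₂ t) ^ (β + 1) ≤ (A₁ + A₂) ^ (β + 1) - (β + 1) * t / 2) ∧
    τ ≤ 2 * (4 : ℝ) ^ (β + 1) / (β + 1) := by
  set S' : ℝ → ℝ := fun s => -((Y₁ s) ^ (-β) + (Y₂ s) ^ (-β)) + (F₁ s + F₂ s) with hS'def
  have hS' : ∀ s ∈ Set.Ico (0 : ℝ) τ,
      HasDerivAt (fun u => Y₁ u + Y₂ u) (S' s) s := by
    intro s hs
    have h := (heq₁ s hs).add (heq₂ s hs)
    refine h.congr_deriv ?_
    simp only [hS'def]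
    ring
  have hbound : ∀ s ∈ Set.Ico (0 : ℝ) τ, Y₁ s + Y₂ s ≤ 4 →
      S' s ≤ -(1 / 2) * (Y₁ s + Y₂ s) ^ (-β) := by
    intro s hs hle4
    obtain ⟨h1, h2⟩ := hpos s hs
    have hS : 0 < Y₁ s + Y₂ s := by linarith
    have e1 : (Y₁ s + Y₂ s) ^ (-β) ≤ (Y₁ s) ^ (-β) :=
      Real.rpow_le_rpow_of_nonpos h1 (by linarith) (by linarith)
    have e2 : (0 : ℝ) < (Y₂ s) ^ (-β) := Real.rpow_pos_of_pos h2 _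
    have e3 : F₁ s + F₂ s ≤ η :=
      le_trans (add_le_add (le_abs_self _) (le_abs_self _)) (hη s)
    have e4 : (4 : ℝ) ^ (-β) ≤ (Y₁ s + Y₂ s) ^ (-β) :=
      Real.rpow_le_rpow_of_nonpos hS hle4 (by linarith)
    simp only [hS'def]
    linarith
  clear hS'def
  clear_value S'
  have key : ∀ t ∈ Set.Ico (0 : ℝ) τ,
      (∀ s ∈ Set.Icc (0 : ℝ) t, Y₁ s + Y₂ s ≤ 4) ∧
      (Y₁ t + Y₂ t) ^ (β + 1) ≤ (A₁ + A₂) ^ (β + 1) - (β + 1) * t / 2 := by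
    intro t ht
    have hsub : Set.Icc (0 : ℝ) t ⊆ Set.Ico (0 : ℝ) τ := fun s hs =>
      ⟨hs.1, lt_of_le_of_lt hs.2 ht.2⟩
    have hsub' : Set.Ico (0 : ℝ) t ⊆ Set.Ico (0 : ℝ) τ := fun s hs =>
      ⟨hs.1, lt_trans hs.2 ht.2⟩
    have hScont : ContinuousOn (fun u => Y₁ u + Y₂ u) (Set.Icc (0 : ℝ) t) := fun s hs =>
      ((hS' s (hsub hs)).continuousAt).continuousWithinAt
    have step1 : ∀ s ∈ Set.Icc (0 : ℝ) t, Y₁ s + Y₂ s ≤ 4 := by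
      have := image_le_of_deriv_right_lt_deriv_boundary' (f := fun u => Y₁ u + Y₂ u)
        (f' := S') (a := 0) (b := t) (B := fun _ => (4 : ℝ)) (B' := fun _ => (0 : ℝ))
        hScont
        (fun s hs => (hS' s (hsub' hs)).hasDerivWithinAt)
        (by show Y₁ 0 + Y₂ 0 ≤ (4 : ℝ); rw [hY₁0, hY₂0]; linarith)
        continuousOn_const
        (fun s _ => (hasDerivAt_const s (4 : ℝ)).hasDerivWithinAt)
        ?_
      · exact fun s hs => this hs
      · intro s hs heq
        have heq' : Y₁ s + Y₂ s = 4 := heq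
        have hb := hbound s (hsub' hs) heq'.le
        have hS : 0 < Y₁ s + Y₂ s := by
          obtain ⟨h1, h2⟩ := hpos s (hsub' hs); linarith
        have hp := Real.rpow_pos_of_pos hS (-β)
        show S' s < (0 : ℝ)
        linarith
    -- step 2
    have hGd : ∀ s ∈ Set.Ico (0 : ℝ) t,
        HasDerivAt (fun u => (Y₁ u + Y₂ u) ^ (β + 1))
          ((β + 1) * (Y₁ s + Y₂ s) ^ β * S' s) s := by
      intro s hs
      obtain ⟨h1, h2⟩ := hpos s (hsub' hs)
      have hS : 0 < Y₁ s + Y₂ s := by linarith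
      have h := (Real.hasDerivAt_rpow_const (x := Y₁ s + Y₂ s) (p := β + 1)
        (Or.inl hS.ne')).comp s (hS' s (hsub' hs))
      have hrw : β + 1 - 1 = β := by ring
      rw [hrw] at h
      exact h
    have hGbound : ∀ s ∈ Set.Ico (0 : ℝ) t,
        (β + 1) * (Y₁ s + Y₂ s) ^ β * S' s ≤ -((β + 1) / 2) := by
      intro s hs
      obtain ⟨h1, h2⟩ := hpos s (hsub' hs)
      have hS : 0 < Y₁ s + Y₂ s := by linarith
      have hb := hbound s (hsub' hs) (step1 s ⟨hs.1, hs.2.le⟩)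
      have hpow : (0 : ℝ) ≤ (β + 1) * (Y₁ s + Y₂ s) ^ β :=
        mul_nonneg (by linarith) (Real.rpow_nonneg hS.le _)
      have hmul := mul_le_mul_of_nonneg_left hb hpow
      have hcancel : (Y₁ s + Y₂ s) ^ β * (Y₁ s + Y₂ s) ^ (-β) = 1 := by
        rw [← Real.rpow_add hS]; simp
      calc (β + 1) * (Y₁ s + Y₂ s) ^ β * S' s
          ≤ (β + 1) * (Y₁ s + Y₂ s) ^ β * (-(1 / 2) * (Y₁ s + Y₂ s) ^ (-β)) := hmul
        _ = -((β + 1) / 2) * ((Y₁ s + Y₂ s) ^ β * (Y₁ s + Y₂ s) ^ (-β)) := by ring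
        _ = -((β + 1) / 2) := by rw [hcancel]; ring
    have hBeq : (fun u : ℝ => (A₁ + A₂) ^ (β + 1) - (β + 1) * u / 2) =
        fun u => (A₁ + A₂) ^ (β + 1) - (β + 1) / 2 * u := by
      funext u; ring
    have hB : ∀ s : ℝ, HasDerivAt (fun u => (A₁ + A₂) ^ (β + 1) - (β + 1) * u / 2)
        (-((β + 1) / 2)) s := by
      intro s
      rw [hBeq]
      have h := ((hasDerivAt_id s).const_mul ((β + 1) / 2)).const_sub
        ((A₁ + A₂) ^ (β + 1))
      simpa using h
    have step2 := image_le_of_deriv_right_le_deriv_boundary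
      (f := fun u => (Y₁ u + Y₂ u) ^ (β + 1))
      (f' := fun s => (β + 1) * (Y₁ s + Y₂ s) ^ β * S' s) (a := 0) (b := t)
      (B := fun u => (A₁ + A₂) ^ (β + 1) - (β + 1) * u / 2)
      (B' := fun _ => -((β + 1) / 2))
      (hScont.rpow_const (fun x _ => Or.inr (by linarith : (0:ℝ) ≤ β + 1)))
      (fun s hs => (hGd s hs).hasDerivWithinAt)
      (by show (Y₁ 0 + Y₂ 0) ^ (β + 1) ≤ (A₁ + A₂) ^ (β + 1) - (β + 1) * 0 / 2
          rw [hY₁0, hY₂0]; simp)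
      (fun s _ => ((hB s).continuousAt).continuousWithinAt)
      (fun s _ => (hB s).hasDerivWithinAt)
      hGbound
    exact ⟨step1, step2 ⟨ht.1, le_refl t⟩⟩
  constructor
  · intro t ht
    obtain ⟨h1, h2⟩ := key t ht
    exact ⟨h1 t ⟨ht.1, le_refl t⟩, h2⟩
  · by_contra hcon
    push_neg at hcon
    set c := 2 * (4 : ℝ) ^ (β + 1) / (β + 1) with hc
    have hcpos : 0 < c := by
      apply div_pos (by positivity) (by linarith)
    obtain ⟨t, htc, htτ⟩ := exists_between hcon
    have ht : t ∈ Set.Ico (0 : ℝ) τ := ⟨by linarith, htτ⟩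
    obtain ⟨-, h2⟩ := key t ht
    obtain ⟨h1, h2'⟩ := hpos t ht
    have hG0 : (0 : ℝ) ≤ (Y₁ t + Y₂ t) ^ (β + 1) := Real.rpow_nonneg (by linarith) _
    have hA4 : (A₁ + A₂) ^ (β + 1) ≤ (4 : ℝ) ^ (β + 1) :=
      Real.rpow_le_rpow (by linarith) (by linarith) (by linarith)
    have : t ≤ c := by
      rw [hc, le_div_iff₀ (by linarith : (0 : ℝ) < β + 1)]
      nlinarith
    linarith
end

section
/- Fix β > 0, τ̄ > 0, and 0 ≤ T < τ̄. The matrix-valued function Φ(t) = (1/2)((τ̄−T)/(τ̄−t))^(β/(β+1)) [[1,1],[1,1]] + (1/2)((τ̄−T)/(τ̄−t))^(3β/(β+1)) [[1,−1],[−1,1]] satisfies Φ(T) = Id and d/dt Φ(t) = (β/(β+1)) · (1/(τ̄−t)) · [[2,−1],[−1,2]] · Φ(t) for all t ∈ [T, τ̄). -/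
noncomputable def fundMatrix (β T τ : ℝ) (t : ℝ) : Matrix (Fin 2) (Fin 2) ℝ :=
  (((1 : ℝ) / 2) * ((τ - T) / (τ - t)) ^ (β / (β + 1))) •
      (!![1, 1; 1, 1] : Matrix (Fin 2) (Fin 2) ℝ) +
    (((1 : ℝ) / 2) * ((τ - T) / (τ - t)) ^ (3 * β / (β + 1))) •
      (!![1, -1; -1, 1] : Matrix (Fin 2) (Fin 2) ℝ)

lemma key_deriv (T τ p t : ℝ) (hTτ : T < τ) (ht : t < τ) :
    HasDerivAt (fun s : ℝ => ((τ - T) / (τ - s)) ^ p)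
      (p * ((τ - T) / (τ - t)) ^ p * (τ - t)⁻¹) t := by
  have hτt : (0:ℝ) < τ - t := by linarith
  have hτT : (0:ℝ) < τ - T := by linarith
  have hb : (0:ℝ) < (τ - T) / (τ - t) := div_pos hτT hτt
  have h1 : HasDerivAt (fun s : ℝ => (τ - s)) (-1) t := by
    simpa using (hasDerivAt_id t).const_sub τ
  have h2 : HasDerivAt (fun s : ℝ => (τ - T) / (τ - s))
      ((0 * (τ - t) - (τ - T) * (-1)) / (τ - t) ^ 2) t :=
    (hasDerivAt_const t (τ - T)).div h1 hτt.ne'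
  have h3 := h2.rpow_const (p := p) (Or.inl hb.ne')
  convert h3 using 1
  rw [Real.rpow_sub_one hb.ne']
  field_simp
  ring

theorem stmt8 (β T τ : ℝ) (hβ : 0 < β) (hτ : 0 < τ) (hT : 0 ≤ T) (hTτ : T < τ) :
    fundMatrix β T τ T = 1 ∧
    ∀ t ∈ Set.Ico T τ, ∀ i j : Fin 2,
      HasDerivAt (fun s => fundMatrix β T τ s i j)
        ((((β / (β + 1)) * (τ - t)⁻¹) •
          ((!![2, -1; -1, 2] : Matrix (Fin 2) (Fin 2) ℝ) * fundMatrix β T τ t)) i j) t := by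
  have hτT : (0:ℝ) < τ - T := by linarith
  constructor
  · have h1 : (τ - T) / (τ - T) = 1 := div_self hτT.ne'
    ext i j
    fin_cases i <;> fin_cases j <;>
      simp [fundMatrix, h1, Real.one_rpow, Matrix.one_apply] <;> norm_num
  · intro t ht i j
    obtain ⟨hTt, htτ⟩ := ht
    have k1 := key_deriv T τ (β / (β + 1)) t hTτ htτ
    have k2 := key_deriv T τ (3 * β / (β + 1)) t hTτ htτ
    have main : ∀ a b : ℝ, HasDerivAt
        (fun s => a * ((τ - T) / (τ - s)) ^ (β / (β + 1)) +
          b * ((τ - T) / (τ - s)) ^ (3 * β / (β + 1)))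
        (a * (β / (β + 1) * ((τ - T) / (τ - t)) ^ (β / (β + 1)) * (τ - t)⁻¹) +
          b * (3 * β / (β + 1) * ((τ - T) / (τ - t)) ^ (3 * β / (β + 1)) * (τ - t)⁻¹)) t :=
      fun a b => (k1.const_mul a).add (k2.const_mul b)
    fin_cases i <;> fin_cases j <;>
      simp only [fundMatrix, Matrix.add_apply, Matrix.smul_apply, Matrix.mul_apply,
        Fin.sum_univ_two, Matrix.cons_val', Matrix.cons_val_zero, Matrix.cons_val_one,
        Matrix.head_cons, Matrix.head_fin_const, Matrix.empty_val',
        Matrix.cons_val_fin_one, smul_eq_mul, Fin.mk_zero, Fin.mk_one, Fin.isValue]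
    · convert main ((1:ℝ)/2) ((1:ℝ)/2) using 1
      · (ext s; simp) <;> ring
      · simp <;> ring
    · convert main ((1:ℝ)/2) (-(1:ℝ)/2) using 1
      · (ext s; simp) <;> ring
      · simp <;> ring
    · convert main ((1:ℝ)/2) (-(1:ℝ)/2) using 1
      · (ext s; simp) <;> ring
      · simp <;> ring
    · convert main ((1:ℝ)/2) ((1:ℝ)/2) using 1
      · (ext s; simp) <;> ring
      · simp <;> ring
end

section
/- Let β > 0, 0 ≤ T < τ̄, and let Y : [T, τ̄) → ℝ² solve Ẏ = (β/(β+1))·(1/(τ̄−t))·[[2,−1],[−1,2]] Y + F(t) with Y(T) = 0 and F continuous. Then there is a constant C (depending only on β) with |Y_p(t)| ≤ C ∫_T^t ((τ̄−s)/(τ̄−t))^(3β/(β+1)) (|F₁(s)| + |F₂(s)|) ds for p = 1, 2 and all t ∈ [T, τ̄). -/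
open intervalIntegral Set

/-- One scalar mode: if `u' = a/(τ-s) * u + G` on `[T,τ)` with `u T = 0`, then
`|u t| ≤ ∫_T^t ((τ-s)/(τ-t))^a |G s| ds`. -/
lemma stmt10_aux (a τ T : ℝ) (ha : 0 < a) (hTτ : T < τ) (u G : ℝ → ℝ)
    (hG : Continuous G) (hu0 : u T = 0)
    (hderiv : ∀ s ∈ Set.Ico T τ, HasDerivAt u (a * (τ - s)⁻¹ * u s + G s) s)
    (t : ℝ) (ht : t ∈ Set.Ico T τ) :
    |u t| ≤ ∫ s in T..t, ((τ - s) / (τ - t)) ^ a * |G s| := by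
  obtain ⟨hTt, htτ⟩ := ht
  have htpos : 0 < τ - t := by linarith
  have hpos : ∀ s ∈ Set.Icc T t, 0 < τ - s := fun s hs => by
    have := hs.2; linarith
  have hφ : ∀ s ∈ Set.uIcc T t,
      HasDerivAt (fun x => (τ - x) ^ a * u x) ((τ - s) ^ a * G s) s := by
    intro s hs
    rw [Set.uIcc_of_le hTt] at hs
    have hspos : 0 < τ - s := hpos s hs
    have h1 : HasDerivAt (fun x : ℝ => (τ - x) ^ a)
        (a * (τ - s) ^ (a - 1) * (-1)) s := by
      have hr : HasDerivAt (fun y : ℝ => y ^ a) (a * (τ - s) ^ (a - 1)) (τ - s) := by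
        simpa using Real.hasDerivAt_rpow_const (x := τ - s) (p := a) (Or.inl hspos.ne')
      exact hr.comp s ((hasDerivAt_id s).const_sub τ)
    have h2 : HasDerivAt u (a * (τ - s)⁻¹ * u s + G s) s :=
      hderiv s ⟨hs.1, lt_of_le_of_lt hs.2 htτ⟩
    have h3 := h1.mul h2
    refine h3.congr_deriv ?_
    rw [Real.rpow_sub_one hspos.ne']
    field_simp
    ring
  have hcont : ContinuousOn (fun s => (τ - s) ^ a) (Set.uIcc T t) := by
    rw [Set.uIcc_of_le hTt]
    intro s hs
    exact ((Real.continuousAt_rpow_const (τ - s) a (Or.inl (hpos s hs).ne')).comp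
      ((by fun_prop : Continuous fun x : ℝ => τ - x).continuousAt)).continuousWithinAt
  have hint : IntervalIntegrable (fun s => (τ - s) ^ a * G s)
      MeasureTheory.volume T t :=
    (hcont.mul hG.continuousOn).intervalIntegrable
  have hftc := intervalIntegral.integral_eq_sub_of_hasDerivAt hφ hint
  rw [hu0, mul_zero, sub_zero] at hftc
  have hta : 0 < (τ - t) ^ a := Real.rpow_pos_of_pos htpos a
  have key : |u t| = ((τ - t) ^ a)⁻¹ * |∫ s in T..t, (τ - s) ^ a * G s| := by
    rw [hftc, abs_mul, abs_of_pos hta]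
    field_simp
  rw [key]
  have habs : |∫ s in T..t, (τ - s) ^ a * G s|
      ≤ ∫ s in T..t, (τ - s) ^ a * |G s| := by
    refine le_trans (intervalIntegral.abs_integral_le_integral_abs hTt) ?_
    refine le_of_eq (intervalIntegral.integral_congr fun s hs => ?_)
    rw [Set.uIcc_of_le hTt] at hs
    rw [abs_mul, abs_of_pos (Real.rpow_pos_of_pos (hpos s hs) a)]
  calc ((τ - t) ^ a)⁻¹ * |∫ s in T..t, (τ - s) ^ a * G s|
      ≤ ((τ - t) ^ a)⁻¹ * ∫ s in T..t, (τ - s) ^ a * |G s| :=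
        mul_le_mul_of_nonneg_left habs (inv_nonneg.mpr hta.le)
    _ = ∫ s in T..t, ((τ - s) / (τ - t)) ^ a * |G s| := by
        rw [← intervalIntegral.integral_const_mul]
        refine intervalIntegral.integral_congr fun s hs => ?_
        rw [Set.uIcc_of_le hTt] at hs
        rw [Real.div_rpow (hpos s hs).le htpos.le]
        field_simp

theorem stmt10 (β : ℝ) (hβ : 0 < β) :
    ∃ C : ℝ, 0 < C ∧
      ∀ T τ : ℝ, 0 ≤ T → T < τ →
        ∀ Y F : ℝ → Fin 2 → ℝ,
          (∀ p : Fin 2, Continuous fun s => F s p) →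
          Y T = 0 →
          (∀ t ∈ Set.Ico T τ, ∀ p : Fin 2,
            HasDerivAt (fun s => Y s p)
              (((β / (β + 1)) * (τ - t)⁻¹) * Matrix.mulVec !![2, -1; -1, 2] (Y t) p
                + F t p) t) →
          ∀ t ∈ Set.Ico T τ, ∀ p : Fin 2,
            |Y t p| ≤ C * ∫ s in T..t,
              ((τ - s) / (τ - t)) ^ (3 * β / (β + 1)) * (|F s 0| + |F s 1|) := by
  refine ⟨1, one_pos, ?_⟩
  intro T τ hT hTτ Y F hF hY0 hderiv t ht p
  have hβ1 : 0 < β + 1 := by linarith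
  set a : ℝ := β / (β + 1) with ha_def
  set b : ℝ := 3 * β / (β + 1) with hb_def
  have ha : 0 < a := div_pos hβ hβ1
  have hb : 0 < b := div_pos (by linarith) hβ1
  have hab : a ≤ b := by rw [ha_def, hb_def]; gcongr; linarith
  have hba : b = 3 * a := by rw [ha_def, hb_def]; ring
  obtain ⟨hTt, htτ⟩ := ht
  have htpos : 0 < τ - t := by linarith
  have hpos : ∀ s ∈ Set.Icc T t, 0 < τ - s := fun s hs => by
    have := hs.2; linarith
  -- diagonal modes
  set u : ℝ → ℝ := fun s => Y s 0 + Y s 1 with hu_def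
  set v : ℝ → ℝ := fun s => Y s 0 - Y s 1 with hv_def
  set G : ℝ → ℝ := fun s => F s 0 + F s 1 with hG_def
  set Gv : ℝ → ℝ := fun s => F s 0 - F s 1 with hGv_def
  have hmv : ∀ s : ℝ, (Matrix.mulVec !![2, -1; -1, 2] (Y s) 0 = 2 * Y s 0 + (-1) * Y s 1)
      ∧ (Matrix.mulVec !![2, -1; -1, 2] (Y s) 1 = (-1) * Y s 0 + 2 * Y s 1) := by
    intro s
    constructor <;> simp [Matrix.mulVec, dotProduct, Fin.sum_univ_two, Matrix.vecHead, Matrix.vecTail]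
  have hu_deriv : ∀ s ∈ Set.Ico T τ, HasDerivAt u (a * (τ - s)⁻¹ * u s + G s) s := by
    intro s hs
    have h0 := hderiv s hs 0
    have h1 := hderiv s hs 1
    rw [(hmv s).1] at h0
    rw [(hmv s).2] at h1
    have := h0.add h1
    refine this.congr_deriv ?_
    simp only [hu_def, hG_def]
    ring
  have hv_deriv : ∀ s ∈ Set.Ico T τ, HasDerivAt v (b * (τ - s)⁻¹ * v s + Gv s) s := by
    intro s hs
    have h0 := hderiv s hs 0
    have h1 := hderiv s hs 1
    rw [(hmv s).1] at h0
    rw [(hmv s).2] at h1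
    have := h0.sub h1
    refine this.congr_deriv ?_
    simp only [hv_def, hGv_def, hba]
    ring
  have hGc : Continuous G := (hF 0).add (hF 1)
  have hGvc : Continuous Gv := (hF 0).sub (hF 1)
  have hu0 : u T = 0 := by simp [hu_def, hY0]
  have hv0 : v T = 0 := by simp [hv_def, hY0]
  have hub := stmt10_aux a τ T ha hTτ u G hGc hu0 hu_deriv t ⟨hTt, htτ⟩
  have hvb := stmt10_aux b τ T hb hTτ v Gv hGvc hv0 hv_deriv t ⟨hTt, htτ⟩
  -- integrability of weighted integrands
  have hrcont : ∀ c : ℝ, ContinuousOn (fun s => ((τ - s) / (τ - t)) ^ c) (Set.uIcc T t) := by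
    intro c
    rw [Set.uIcc_of_le hTt]
    intro s hs
    have hne : (τ - s) / (τ - t) ≠ 0 := (div_pos (hpos s hs) htpos).ne'
    exact ((((continuous_const.sub continuous_id).div_const _).continuousAt).rpow_const
      (Or.inl hne)).continuousWithinAt
  have hint : ∀ (c : ℝ) (W : ℝ → ℝ), Continuous W →
      IntervalIntegrable (fun s => ((τ - s) / (τ - t)) ^ c * W s) MeasureTheory.volume T t :=
    fun c W hW => ((hrcont c).mul hW.continuousOn).intervalIntegrable
  set H : ℝ → ℝ := fun s => |F s 0| + |F s 1| with hH_def
  have hHc : Continuous H := ((hF 0).abs.add (hF 1).abs)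
  have hr1 : ∀ s ∈ Set.Icc T t, (1 : ℝ) ≤ (τ - s) / (τ - t) := fun s hs =>
    (one_le_div htpos).mpr (by have := hs.2; linarith)
  have hmono : ∀ (c : ℝ) (W : ℝ → ℝ), Continuous W → c ≤ b →
      (∀ s, |W s| ≤ H s) →
      (∫ s in T..t, ((τ - s) / (τ - t)) ^ c * |W s|)
        ≤ ∫ s in T..t, ((τ - s) / (τ - t)) ^ b * H s := by
    intro c W hW hcb hWH
    refine intervalIntegral.integral_mono_on hTt (hint c _ hW.abs) (hint b _ hHc)
      fun s hs => ?_
    have h1 : ((τ - s) / (τ - t)) ^ c ≤ ((τ - s) / (τ - t)) ^ b :=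
      Real.rpow_le_rpow_of_exponent_le (hr1 s hs) hcb
    exact mul_le_mul h1 (hWH s) (abs_nonneg _)
      (Real.rpow_nonneg (by linarith [hr1 s hs]) _)
  have hu_final : |u t| ≤ ∫ s in T..t, ((τ - s) / (τ - t)) ^ b * H s :=
    hub.trans (hmono a G hGc hab fun s => by
      simp only [hG_def, hH_def]; exact abs_add_le _ _)
  have hv_final : |v t| ≤ ∫ s in T..t, ((τ - s) / (τ - t)) ^ b * H s :=
    hvb.trans (hmono b Gv hGvc le_rfl fun s => by
      simp only [hGv_def, hH_def]; exact abs_sub _ _)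
  have hYp : |Y t p| ≤ (|u t| + |v t|) / 2 := by
    fin_cases p
    · show |Y t 0| ≤ _
      have h : Y t 0 = (u t + v t) / 2 := by simp only [hu_def, hv_def]; ring
      rw [h, abs_div, abs_two]
      have := abs_add_le (u t) (v t)
      linarith
    · show |Y t 1| ≤ _
      have h : Y t 1 = (u t - v t) / 2 := by simp only [hu_def, hv_def]; ring
      rw [h, abs_div, abs_two]
      have := abs_sub (u t) (v t)
      linarith
  rw [one_mul]
  calc |Y t p| ≤ (|u t| + |v t|) / 2 := hYp
    _ ≤ ∫ s in T..t, ((τ - s) / (τ - t)) ^ b * H s := by linarith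
end

section
/- Let β > 0 and let Y₁, Y₂ : (−∞, −1] → (0, ∞) be a C¹ solution of Ẏ₁ = −2Y₁^(−β) + Y₂^(−β), Ẏ₂ = −2Y₂^(−β) + Y₁^(−β) with Y₁(−1) = (4(β+1))^(1/(β+1)) and Y₂(−1) = 0 (limit value). If Y_min = min(Y₁,Y₂) and Y_max = max(Y₁,Y₂), then for all t ≤ −1: ((β+1)(−1−t))^(1/(β+1)) ≤ Y_min(t) ≤ Y_max(t) ≤ ((β+1)(3−t))^(1/(β+1)). -/
open Set Filter Topology

lemma aux_psi {φ : ℝ → ℝ} {x d c r M : ℝ} (h : HasDerivAt φ d x)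
    (hle : φ x ≤ M) (hd : φ x = M → d ≤ c) (hr : c < r) :
    ∀ᶠ z in 𝓝[>] x, (φ z - M) / (z - x) < r := by
  have hmono : 𝓝[>] x ≤ 𝓝[≠] x :=
    nhdsWithin_mono x (fun z hz => ne_of_gt hz)
  have hslope : Tendsto (slope φ x) (𝓝[>] x) (𝓝 d) :=
    (hasDerivAt_iff_tendsto_slope.1 h).mono_left hmono
  rcases eq_or_lt_of_le hle with heq | hlt
  · have hev : ∀ᶠ z in 𝓝[>] x, slope φ x z < r :=
      hslope.eventually_lt_const (lt_of_le_of_lt (hd heq) hr)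
    refine hev.mono fun z hz => ?_
    rwa [slope_def_field, heq] at hz
  · have h1 : Tendsto (fun z => z - x) (𝓝[>] x) (𝓝[>] (0:ℝ)) := by
      apply tendsto_nhdsWithin_of_tendsto_nhds_of_eventually_within
      · have : Tendsto (fun z : ℝ => z - x) (𝓝 x) (𝓝 0) := by
          simpa using ((continuous_sub_right x).tendsto x :
            Tendsto (fun z : ℝ => z - x) (𝓝 x) (𝓝 (x - x)))
        exact this.mono_left nhdsWithin_le_nhds
      · filter_upwards [self_mem_nhdsWithin] with z hz
        exact sub_pos.2 (mem_Ioi.mp hz)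
    have h2 : Tendsto (fun z => (z - x)⁻¹) (𝓝[>] x) atTop :=
      tendsto_inv_nhdsGT_zero.comp h1
    have h3 : Tendsto (fun z => (φ x - M) * (z - x)⁻¹) (𝓝[>] x) atBot :=
      (tendsto_const_mul_atBot_of_neg (sub_neg.2 hlt)).2 h2
    have hbd : ∀ᶠ z in 𝓝[>] x, slope φ x z ≤ d + 1 :=
      hslope.eventually_le_const (lt_add_one d)
    have h4 : Tendsto (fun z => slope φ x z + (φ x - M) * (z - x)⁻¹) (𝓝[>] x) atBot :=
      tendsto_atBot_add_left_of_ge' _ (d + 1) hbd h3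
    have h5 : ∀ᶠ z in 𝓝[>] x, slope φ x z + (φ x - M) * (z - x)⁻¹ < r :=
      h4.eventually_lt_atBot r
    filter_upwards [h5, self_mem_nhdsWithin] with z hz (hz2 : x < z)
    have hne : z - x ≠ 0 := ne_of_gt (sub_pos.2 hz2)
    have : (φ z - M) / (z - x) = slope φ x z + (φ x - M) * (z - x)⁻¹ := by
      rw [slope_def_field]
      field_simp
      ring
    rw [this]
    exact hz

lemma max_comp_le {φ₁ φ₂ B : ℝ → ℝ} {a b c : ℝ} {d₁ d₂ : ℝ → ℝ}
    (hc₁ : ContinuousOn φ₁ (Icc a b)) (hc₂ : ContinuousOn φ₂ (Icc a b))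
    (hder₁ : ∀ x ∈ Ico a b, HasDerivAt φ₁ (d₁ x) x)
    (hder₂ : ∀ x ∈ Ico a b, HasDerivAt φ₂ (d₂ x) x)
    (hb₁ : ∀ x ∈ Ico a b, φ₂ x ≤ φ₁ x → d₁ x ≤ c)
    (hb₂ : ∀ x ∈ Ico a b, φ₁ x ≤ φ₂ x → d₂ x ≤ c)
    (hB : ∀ x, HasDerivAt B c x)
    (ha : max (φ₁ a) (φ₂ a) ≤ B a) :
    ∀ x ∈ Icc a b, max (φ₁ x) (φ₂ x) ≤ B x := by
  intro x hx
  refine image_le_of_liminf_slope_right_le_deriv_boundary (f := fun t => max (φ₁ t) (φ₂ t))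
    (B := B) (B' := fun _ => c) (fun y hy => (hc₁ y hy).max (hc₂ y hy)) ha
    (fun y _ => (hB y).continuousAt.continuousWithinAt)
    (fun y _ => (hB y).hasDerivWithinAt) ?_ hx
  intro y hy r hr
  set M := max (φ₁ y) (φ₂ y) with hM
  have e₁ : ∀ᶠ z in 𝓝[>] y, (φ₁ z - M) / (z - y) < r :=
    aux_psi (hder₁ y hy) (le_max_left _ _)
      (fun h => hb₁ y hy (h ▸ le_max_right _ _)) hr
  have e₂ : ∀ᶠ z in 𝓝[>] y, (φ₂ z - M) / (z - y) < r :=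
    aux_psi (hder₂ y hy) (le_max_right _ _)
      (fun h => hb₂ y hy (h ▸ le_max_left _ _)) hr
  refine ((e₁.and (e₂.and self_mem_nhdsWithin)).mono ?_).frequently
  rintro z ⟨h1, h2, (hz : y < z)⟩
  have hpos : (0:ℝ) < z - y := sub_pos.2 hz
  have : slope (fun t => max (φ₁ t) (φ₂ t)) y z
      = max ((φ₁ z - M) / (z - y)) ((φ₂ z - M) / (z - y)) := by
    rw [slope_def_field, ← max_sub_sub_right, ← max_div_div_right hpos.le]
  rw [this]
  exact max_lt h1 h2

lemma key_ineq {β x y : ℝ} (hβ : 0 < β) (hx : 0 < x) (hy : 0 < y) (hxy : y ≤ x) :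
    -(β + 1) ≤ (-2 * x ^ (-β) + y ^ (-β)) * (β + 1) * x ^ β := by
  have h1 : x ^ β * x ^ (-β) = 1 := by
    rw [← Real.rpow_add hx]; simp
  have h2 : x ^ (-β) ≤ y ^ (-β) :=
    Real.rpow_le_rpow_of_nonpos hy hxy (neg_nonpos.2 hβ.le)
  have h3 : (0:ℝ) < x ^ β := Real.rpow_pos_of_pos hx β
  nlinarith [mul_le_mul_of_nonneg_left h2 h3.le]

lemma key_ineq' {β x y : ℝ} (hβ : 0 < β) (hx : 0 < x) (hy : 0 < y) (hxy : x ≤ y) :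
    (-2 * x ^ (-β) + y ^ (-β)) * (β + 1) * x ^ β ≤ -(β + 1) := by
  have h1 : x ^ β * x ^ (-β) = 1 := by
    rw [← Real.rpow_add hx]; simp
  have h2 : y ^ (-β) ≤ x ^ (-β) :=
    Real.rpow_le_rpow_of_nonpos hx hxy (neg_nonpos.2 hβ.le)
  have h3 : (0:ℝ) < x ^ β := Real.rpow_pos_of_pos hx β
  nlinarith [mul_le_mul_of_nonneg_left h2 h3.le]

theorem stmt14 (β : ℝ) (hβ : 0 < β) (Y₁ Y₂ : ℝ → ℝ)
    (hpos : ∀ t < (-1 : ℝ), 0 < Y₁ t ∧ 0 < Y₂ t)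
    (heq₁ : ∀ t < (-1 : ℝ), HasDerivAt Y₁ (-2 * (Y₁ t) ^ (-β) + (Y₂ t) ^ (-β)) t)
    (heq₂ : ∀ t < (-1 : ℝ), HasDerivAt Y₂ (-2 * (Y₂ t) ^ (-β) + (Y₁ t) ^ (-β)) t)
    (hY₁ : Y₁ (-1) = (4 * (β + 1)) ^ (1 / (β + 1)))
    (hY₂ : Y₂ (-1) = 0)
    (hcont₁ : ContinuousOn Y₁ (Set.Iic (-1 : ℝ)))
    (hcont₂ : ContinuousOn Y₂ (Set.Iic (-1 : ℝ))) :
    ∀ t ≤ (-1 : ℝ),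
      ((β + 1) * (-1 - t)) ^ (1 / (β + 1)) ≤ min (Y₁ t) (Y₂ t) ∧
      max (Y₁ t) (Y₂ t) ≤ ((β + 1) * (3 - t)) ^ (1 / (β + 1)) := by
  have hβ1 : (0:ℝ) < β + 1 := by linarith
  set f₁ : ℝ → ℝ := fun t => Y₁ t ^ (β + 1) with hf₁def
  set f₂ : ℝ → ℝ := fun t => Y₂ t ^ (β + 1) with hf₂def
  have hfc₁ : ContinuousOn f₁ (Iic (-1:ℝ)) :=
    hcont₁.rpow_const (fun t _ => Or.inr hβ1.le)
  have hfc₂ : ContinuousOn f₂ (Iic (-1:ℝ)) :=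
    hcont₂.rpow_const (fun t _ => Or.inr hβ1.le)
  have hf₁neg1 : f₁ (-1) = 4 * (β + 1) := by
    simp only [hf₁def, hY₂, hY₁, one_div]
    exact Real.rpow_inv_rpow (by positivity) hβ1.ne'
  have hf₂neg1 : f₂ (-1) = 0 := by
    simp only [hf₂def, hY₂]
    exact Real.zero_rpow hβ1.ne'
  -- derivatives of reversed functions
  have hder₁ : ∀ x : ℝ, 1 < x →
      HasDerivAt (fun τ => f₁ (-τ))
        (-((-2 * Y₁ (-x) ^ (-β) + Y₂ (-x) ^ (-β)) * (β + 1) * Y₁ (-x) ^ β)) x := by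
    intro x hx
    have hx' : (-x) < -1 := by linarith
    have hd := (heq₁ (-x) hx').rpow_const (p := β + 1) (Or.inl (hpos _ hx').1.ne')
    rw [show β + 1 - 1 = β by ring] at hd
    have := hd.comp x (hasDerivAt_neg x)
    exact this.congr_deriv (by ring)
  have hder₂ : ∀ x : ℝ, 1 < x →
      HasDerivAt (fun τ => f₂ (-τ))
        (-((-2 * Y₂ (-x) ^ (-β) + Y₁ (-x) ^ (-β)) * (β + 1) * Y₂ (-x) ^ β)) x := by
    intro x hx
    have hx' : (-x) < -1 := by linarith
    have hd := (heq₂ (-x) hx').rpow_const (p := β + 1) (Or.inl (hpos _ hx').2.ne')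
    rw [show β + 1 - 1 = β by ring] at hd
    have := hd.comp x (hasDerivAt_neg x)
    exact this.congr_deriv (by ring)
  -- comparison of Y values from f values
  have hfle : ∀ x : ℝ, 1 < x → ∀ {u v : ℝ}, 0 < u → 0 < v →
      u ^ (β+1) ≤ v ^ (β+1) → u ≤ v := by
    intro x hx u v hu hv h
    exact (Real.rpow_le_rpow_iff hu.le hv.le hβ1).1 h

  -- reversed continuity
  have hmaps : Set.MapsTo (fun τ : ℝ => -τ) (Ici (1:ℝ)) (Iic (-1:ℝ)) := by
    intro τ hτ
    simp only [mem_Iic]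
    have : (1:ℝ) ≤ τ := hτ
    linarith
  have hφc₁ : ContinuousOn (fun τ => f₁ (-τ)) (Ici (1:ℝ)) :=
    hfc₁.comp continuousOn_id.neg hmaps
  have hφc₂ : ContinuousOn (fun τ => f₂ (-τ)) (Ici (1:ℝ)) :=
    hfc₂.comp continuousOn_id.neg hmaps
  -- Upper bound claim
  have claimU : ∀ t < (-1:ℝ), max (f₁ t) (f₂ t) ≤ (β + 1) * (3 - t) := by
    intro t ht
    have hτ : 1 < -t := by linarith
    refine le_of_forall_pos_le_add ?_
    intro ε hε
    set G : ℝ → ℝ := fun τ => max (f₁ (-τ)) (f₂ (-τ)) with hG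
    have hG1 : G 1 = 4 * (β + 1) := by
      simp only [hG, hf₁neg1, hf₂neg1]
      exact max_eq_left (by nlinarith)
    have hGc : ContinuousWithinAt G (Ici 1) 1 :=
      ((hφc₁ 1 self_mem_Ici).max (hφc₂ 1 self_mem_Ici))
    have hev : ∀ᶠ z in 𝓝[>] (1:ℝ), G z < G 1 + ε :=
      (hGc.tendsto.eventually_lt_const (lt_add_of_pos_right _ hε)).filter_mono
        (nhdsWithin_mono 1 Ioi_subset_Ici_self)
    obtain ⟨a, haG, ha1, haτ⟩ : ∃ a, G a < G 1 + ε ∧ 1 < a ∧ a ≤ -t := by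
      rcases (hev.and (Ioc_mem_nhdsGT_of_mem ⟨le_rfl, hτ⟩)).exists with ⟨a, h1, h2⟩
      exact ⟨a, h1, h2.1, h2.2⟩
    have hsub : Icc a (-t) ⊆ Ici (1:ℝ) := fun z hz => le_trans ha1.le hz.1
    set B : ℝ → ℝ := fun τ => 4 * (β + 1) + ε + (β + 1) * (τ - 1) with hB
    have hBd : ∀ x, HasDerivAt B (β + 1) x := by
      intro x
      have := (((hasDerivAt_id x).sub_const 1).const_mul (β + 1)).const_add
        (4 * (β + 1) + ε)
      rw [hB]
      simpa using this
    have hmain := max_comp_le (a := a) (b := -t) (c := β + 1)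
      (φ₁ := fun τ => f₁ (-τ)) (φ₂ := fun τ => f₂ (-τ))
      (d₁ := fun x => -((-2 * Y₁ (-x) ^ (-β) + Y₂ (-x) ^ (-β)) * (β + 1) * Y₁ (-x) ^ β))
      (d₂ := fun x => -((-2 * Y₂ (-x) ^ (-β) + Y₁ (-x) ^ (-β)) * (β + 1) * Y₂ (-x) ^ β))
      (B := B)
      (hφc₁.mono hsub) (hφc₂.mono hsub)
      (fun x hx => hder₁ x (lt_of_lt_of_le ha1 hx.1))
      (fun x hx => hder₂ x (lt_of_lt_of_le ha1 hx.1))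
      (fun x hx hle => by
        have hx1 : 1 < x := lt_of_lt_of_le ha1 hx.1
        have hx' : (-x) < -1 := by linarith
        obtain ⟨hp1, hp2⟩ := hpos (-x) hx'
        have hYle : Y₂ (-x) ≤ Y₁ (-x) :=
          (Real.rpow_le_rpow_iff hp2.le hp1.le hβ1).1 hle
        have := key_ineq hβ hp1 hp2 hYle
        linarith)
      (fun x hx hle => by
        have hx1 : 1 < x := lt_of_lt_of_le ha1 hx.1
        have hx' : (-x) < -1 := by linarith
        obtain ⟨hp1, hp2⟩ := hpos (-x) hx'
        have hYle : Y₁ (-x) ≤ Y₂ (-x) :=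
          (Real.rpow_le_rpow_iff hp1.le hp2.le hβ1).1 hle
        have := key_ineq hβ hp2 hp1 hYle
        linarith)
      hBd
      (by
        have : G a ≤ B a := by
          have hBa : 4 * (β + 1) + ε ≤ B a := by
            simp only [hB]
            nlinarith
          calc G a ≤ G 1 + ε := haG.le
            _ = 4 * (β + 1) + ε := by rw [hG1]
            _ ≤ B a := hBa
        exact this)
      (-t) ⟨haτ, le_rfl⟩
    have : max (f₁ t) (f₂ t) ≤ B (-t) := by
      simpa using hmain
    simp only [hB] at this
    linarith
  -- Lower bound claim
  have claimL : ∀ t < (-1:ℝ), (β + 1) * (-1 - t) ≤ min (f₁ t) (f₂ t) := by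
    intro t ht
    have hτ : 1 < -t := by linarith
    have hkey : ∀ ε > 0, (β + 1) * (-1 - t) ≤ min (f₁ t) (f₂ t) + ε := by
      intro ε hε
      set G : ℝ → ℝ := fun τ => max (-(f₁ (-τ))) (-(f₂ (-τ))) with hG
      have hG1 : G 1 = 0 := by
        simp only [hG, hf₁neg1, hf₂neg1]
        rw [neg_zero]
        exact max_eq_right (by nlinarith)
      have hGc : ContinuousWithinAt G (Ici 1) 1 :=
        ((hφc₁ 1 self_mem_Ici).neg.max (hφc₂ 1 self_mem_Ici).neg)
      have hev : ∀ᶠ z in 𝓝[>] (1:ℝ), G z < G 1 + ε / 2 :=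
        (hGc.tendsto.eventually_lt_const (lt_add_of_pos_right _ (by linarith))).filter_mono
          (nhdsWithin_mono 1 Ioi_subset_Ici_self)
      have hmin1 : (1:ℝ) < min (-t) (1 + ε / (2 * (β + 1))) := by
        apply lt_min hτ
        have : 0 < ε / (2 * (β + 1)) := by positivity
        linarith
      obtain ⟨a, haG, ha1, haτ, haε⟩ :
          ∃ a, G a < G 1 + ε / 2 ∧ 1 < a ∧ a ≤ -t ∧ a ≤ 1 + ε / (2 * (β + 1)) := by
        rcases (hev.and (Ioc_mem_nhdsGT_of_mem ⟨le_rfl, hmin1⟩)).exists with ⟨a, h1, h2⟩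
        exact ⟨a, h1, h2.1, le_trans h2.2 (min_le_left _ _), le_trans h2.2 (min_le_right _ _)⟩
      have hsub : Icc a (-t) ⊆ Ici (1:ℝ) := fun z hz => le_trans ha1.le hz.1
      set B : ℝ → ℝ := fun τ => ε - (β + 1) * (τ - 1) with hB
      have hBd : ∀ x, HasDerivAt B (-(β + 1)) x := by
        intro x
        have := (((hasDerivAt_id x).sub_const 1).const_mul (β + 1)).const_sub ε
        simpa using this
      have hmain := max_comp_le (a := a) (b := -t) (c := -(β + 1))
        (φ₁ := fun τ => -(f₁ (-τ))) (φ₂ := fun τ => -(f₂ (-τ)))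
        (d₁ := fun x => (-2 * Y₁ (-x) ^ (-β) + Y₂ (-x) ^ (-β)) * (β + 1) * Y₁ (-x) ^ β)
        (d₂ := fun x => (-2 * Y₂ (-x) ^ (-β) + Y₁ (-x) ^ (-β)) * (β + 1) * Y₂ (-x) ^ β)
        (B := B)
        ((hφc₁.mono hsub).neg) ((hφc₂.mono hsub).neg)
        (fun x hx => by
          have := (hder₁ x (lt_of_lt_of_le ha1 hx.1)).neg
          rw [neg_neg] at this
          exact this)
        (fun x hx => by
          have := (hder₂ x (lt_of_lt_of_le ha1 hx.1)).neg
          rw [neg_neg] at this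
          exact this)
        (fun x hx hle => by
          have hx1 : 1 < x := lt_of_lt_of_le ha1 hx.1
          have hx' : (-x) < -1 := by linarith
          obtain ⟨hp1, hp2⟩ := hpos (-x) hx'
          have hle2 := hle
          have hle' : f₁ (-x) ≤ f₂ (-x) := by linarith
          have hYle : Y₁ (-x) ≤ Y₂ (-x) :=
            (Real.rpow_le_rpow_iff hp1.le hp2.le hβ1).1 hle'
          exact key_ineq' hβ hp1 hp2 hYle)
        (fun x hx hle => by
          have hx1 : 1 < x := lt_of_lt_of_le ha1 hx.1
          have hx' : (-x) < -1 := by linarith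
          obtain ⟨hp1, hp2⟩ := hpos (-x) hx'
          have hle2 := hle
          have hle' : f₂ (-x) ≤ f₁ (-x) := by linarith
          have hYle : Y₂ (-x) ≤ Y₁ (-x) :=
            (Real.rpow_le_rpow_iff hp2.le hp1.le hβ1).1 hle'
          exact key_ineq' hβ hp2 hp1 hYle)
        hBd
        (by
          have h1 : G a < ε / 2 := by rw [hG1] at haG; linarith
          have h2 : (β + 1) * (a - 1) ≤ ε / 2 := by
            have : a - 1 ≤ ε / (2 * (β + 1)) := by linarith
            calc (β + 1) * (a - 1) ≤ (β + 1) * (ε / (2 * (β + 1))) :=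
                  mul_le_mul_of_nonneg_left this hβ1.le
              _ = ε / 2 := by field_simp
          show max (-(f₁ (-a))) (-(f₂ (-a))) ≤ B a
          have : G a ≤ B a := by
            simp only [hB]
            linarith
          exact this)
        (-t) ⟨haτ, le_rfl⟩
      have hfin : max (-(f₁ t)) (-(f₂ t)) ≤ B (-t) := by
        simpa using hmain
      simp only [hB] at hfin
      rcases max_le_iff.1 hfin with ⟨h1, h2⟩
      rcases le_total (f₁ t) (f₂ t) with h | h
      · rw [min_eq_left h]; linarith
      · rw [min_eq_right h]; linarith
    exact le_of_forall_pos_le_add hkey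
  -- Final assembly
  intro t ht
  rcases eq_or_lt_of_le ht with heq | hlt
  · subst heq
    constructor
    · have h0 : ((β + 1) * (-1 - (-1:ℝ))) = 0 := by ring
      rw [h0, Real.zero_rpow (one_div_pos.2 hβ1).ne']
      refine le_min ?_ ?_
      · rw [hY₁]
        exact Real.rpow_nonneg (by nlinarith) _
      · rw [hY₂]
    · have h1 : (0:ℝ) ≤ Y₁ (-1) := by
        rw [hY₁]
        exact Real.rpow_nonneg (by nlinarith) _
      have h2 : Y₂ (-1) ≤ Y₁ (-1) := by rw [hY₂]; exact h1
      rw [max_eq_left h2, hY₁, show (β + 1) * (3 - (-1:ℝ)) = 4 * (β + 1) by ring]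
  · obtain ⟨hY1, hY2⟩ := hpos t hlt
    have hU := claimU t hlt
    rcases max_le_iff.1 hU with ⟨hU1, hU2⟩
    have hL := claimL t hlt
    have hL1 : (β + 1) * (-1 - t) ≤ f₁ t := le_trans hL (min_le_left _ _)
    have hL2 : (β + 1) * (-1 - t) ≤ f₂ t := le_trans hL (min_le_right _ _)
    have hinvpos : (0:ℝ) ≤ 1 / (β + 1) := by positivity
    have hfeq₁ : (f₁ t) ^ (1 / (β + 1)) = Y₁ t := by
      rw [one_div]
      exact Real.rpow_rpow_inv hY1.le hβ1.ne'
    have hfeq₂ : (f₂ t) ^ (1 / (β + 1)) = Y₂ t := by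
      rw [one_div]
      exact Real.rpow_rpow_inv hY2.le hβ1.ne'
    have hLpos : (0:ℝ) ≤ (β + 1) * (-1 - t) := by nlinarith
    constructor
    · refine le_min ?_ ?_
      · have := Real.rpow_le_rpow hLpos hL1 hinvpos
        rwa [hfeq₁] at this
      · have := Real.rpow_le_rpow hLpos hL2 hinvpos
        rwa [hfeq₂] at this
    · refine max_le ?_ ?_
      · have hf0 : (0:ℝ) ≤ f₁ t := Real.rpow_nonneg hY1.le _
        have := Real.rpow_le_rpow hf0 hU1 hinvpos
        rwa [hfeq₁] at this
      · have hf0 : (0:ℝ) ≤ f₂ t := Real.rpow_nonneg hY2.le _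
        have := Real.rpow_le_rpow hf0 hU2 hinvpos
        rwa [hfeq₂] at this
end

section
/- Let β > 0 and let W₁, W₂ : [0, ∞) → (0, ∞) be C¹ functions satisfying d/ds W_p = −W_p/(β+1) + 2 W_p^(−β) − W_{3−p}^(−β) for p = 1, 2. Then |W₁(s) − W₂(s)| ≤ |W₁(0) − W₂(0)| e^(−s/(β+1)) for all s ≥ 0. -/
theorem stmt15 (β : ℝ) (hβ : 0 < β) (W₁ W₂ : ℝ → ℝ)
    (hpos : ∀ s : ℝ, 0 ≤ s → 0 < W₁ s ∧ 0 < W₂ s)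
    (heq₁ : ∀ s : ℝ, 0 ≤ s →
      HasDerivAt W₁ (-(W₁ s) / (β + 1) + 2 * (W₁ s) ^ (-β) - (W₂ s) ^ (-β)) s)
    (heq₂ : ∀ s : ℝ, 0 ≤ s →
      HasDerivAt W₂ (-(W₂ s) / (β + 1) + 2 * (W₂ s) ^ (-β) - (W₁ s) ^ (-β)) s) :
    ∀ s : ℝ, 0 ≤ s →
      |W₁ s - W₂ s| ≤ |W₁ 0 - W₂ 0| * Real.exp (-s / (β + 1)) := by
  have hc : (0:ℝ) < β + 1 := by linarith
  set F : ℝ → ℝ := fun t => ((W₁ t - W₂ t) * Real.exp (t / (β + 1))) ^ 2 with hFdef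
  have hF : ∀ t : ℝ, 0 ≤ t → HasDerivAt F
      (2 * ((W₁ t - W₂ t) * Real.exp (t / (β + 1))) *
        (3 * ((W₁ t) ^ (-β) - (W₂ t) ^ (-β)) * Real.exp (t / (β + 1)))) t := by
    intro t ht
    have hE : HasDerivAt (fun u => Real.exp (u / (β + 1)))
        (Real.exp (t / (β + 1)) * (1 / (β + 1))) t := by
      simpa using (((hasDerivAt_id t).div_const (β + 1)).exp)
    have hD : HasDerivAt (fun u => W₁ u - W₂ u)
        (-(W₁ t - W₂ t) / (β + 1) + 3 * ((W₁ t) ^ (-β) - (W₂ t) ^ (-β))) t := by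
      have := (heq₁ t ht).sub (heq₂ t ht)
      exact this.congr_deriv (by ring)
    have hh : HasDerivAt (fun u => (W₁ u - W₂ u) * Real.exp (u / (β + 1)))
        (3 * ((W₁ t) ^ (-β) - (W₂ t) ^ (-β)) * Real.exp (t / (β + 1))) t := by
      have := hD.mul hE
      exact this.congr_deriv (by field_simp; ring)
    have := hh.pow 2
    exact this.congr_deriv (by ring)
  have hcont : ContinuousOn F (Set.Ici 0) :=
    fun x hx => (hF x hx).continuousAt.continuousWithinAt
  have hdiff : DifferentiableOn ℝ F (interior (Set.Ici (0:ℝ))) := by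
    rw [interior_Ici]
    exact fun x hx => ((hF x (le_of_lt hx)).differentiableAt).differentiableWithinAt
  have hanti : AntitoneOn F (Set.Ici 0) := by
    apply antitoneOn_of_deriv_nonpos (convex_Ici 0) hcont hdiff
    intro x hx
    rw [interior_Ici] at hx
    rw [(hF x hx.le).deriv]
    have h1 : (W₁ x - W₂ x) * ((W₁ x) ^ (-β) - (W₂ x) ^ (-β)) ≤ 0 := by
      rcases le_total (W₁ x) (W₂ x) with h | h
      · apply mul_nonpos_of_nonpos_of_nonneg (by linarith)
        have := Real.rpow_le_rpow_of_nonpos (hpos x hx.le).1 h (neg_nonpos.mpr hβ.le)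
        linarith
      · apply mul_nonpos_of_nonneg_of_nonpos (by linarith)
        have := Real.rpow_le_rpow_of_nonpos (hpos x hx.le).2 h (neg_nonpos.mpr hβ.le)
        linarith
    have hE2 : (0:ℝ) ≤ Real.exp (x / (β + 1)) * Real.exp (x / (β + 1)) :=
      le_of_lt (by positivity)
    nlinarith [hE2, h1, mul_nonneg hE2 (neg_nonneg.mpr h1)]
  intro s hs
  have hFs : F s ≤ F 0 := hanti (Set.self_mem_Ici) hs hs
  have h0 : F 0 = (W₁ 0 - W₂ 0) ^ 2 := by
    simp [hFdef]
  have h1 : ((W₁ s - W₂ s) * Real.exp (s / (β + 1))) ^ 2 ≤ (W₁ 0 - W₂ 0) ^ 2 := by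
    rw [← h0]; exact hFs
  have habs : |(W₁ s - W₂ s) * Real.exp (s / (β + 1))| ≤ |W₁ 0 - W₂ 0| := by
    have := Real.sqrt_le_sqrt h1
    rwa [Real.sqrt_sq_eq_abs, Real.sqrt_sq_eq_abs] at this
  rw [abs_mul, abs_of_pos (Real.exp_pos _)] at habs
  rw [neg_div, Real.exp_neg, ← div_eq_mul_inv]
  exact (le_div_iff₀ (Real.exp_pos _)).mpr habs
end

section
/- Let β > 0, τ̄ > 0, η ≥ 0, and let W₁, W₂ : [s₀, ∞) → [c, C] (0 < c ≤ C) be C¹ solutions of d/ds W_p = W_p + (β+1)(−2W_p^(−β) + W_{3−p}^(−β)) + G_p(s), p=1,2, where |G₁(s)| + |G₂(s)| ≤ (β+1) R^β η e^(−sβ) for some R > 0. If for some s₁ ≥ s₀ one has |W₁(s₁) − W₂(s₁)| > (β+1) R^β η e^(−s₁ β), then |W₁ − W₂| grows at least exponentially like e^(s − s₁) times a positive amount, contradicting boundedness; hence |W₁(s) − W₂(s)| ≤ (β+1) R^β η e^(−sβ) for all s ≥ s₀. -/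
lemma key16 (β η R c C s₀ : ℝ) (hβ : 0 < β) (hη : 0 ≤ η) (hR : 0 < R)
    (hc : 0 < c) (hcC : c ≤ C)
    (W₁ W₂ G₁ G₂ : ℝ → ℝ)
    (hbd : ∀ s, s₀ ≤ s → W₁ s ∈ Set.Icc c C ∧ W₂ s ∈ Set.Icc c C)
    (heq₁ : ∀ s, s₀ ≤ s → HasDerivAt W₁
      (W₁ s + (β + 1) * (-2 * (W₁ s) ^ (-β) + (W₂ s) ^ (-β)) + G₁ s) s)
    (heq₂ : ∀ s, s₀ ≤ s → HasDerivAt W₂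
      (W₂ s + (β + 1) * (-2 * (W₂ s) ^ (-β) + (W₁ s) ^ (-β)) + G₂ s) s)
    (hG : ∀ s, s₀ ≤ s → |G₁ s| + |G₂ s| ≤ (β + 1) * R ^ β * η * Real.exp (-s * β)) :
    ∀ s, s₀ ≤ s → W₁ s - W₂ s ≤ (β + 1) * R ^ β * η * Real.exp (-s * β) := by
  by_contra hcon
  push_neg at hcon
  obtain ⟨s₁, hs₁, hbig⟩ := hcon
  obtain ⟨M, hMdef⟩ : ∃ M : ℝ, M = (β + 1) * R ^ β * η := ⟨_, rfl⟩
  have hM : 0 ≤ M := by rw [hMdef]; positivity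
  obtain ⟨D, hDdef⟩ : ∃ D : ℝ → ℝ, D = fun s => W₁ s - W₂ s := ⟨_, rfl⟩
  obtain ⟨d, hddef⟩ : ∃ d : ℝ → ℝ, d = fun s =>
    (W₁ s + (β + 1) * (-2 * (W₁ s) ^ (-β) + (W₂ s) ^ (-β)) + G₁ s) -
    (W₂ s + (β + 1) * (-2 * (W₂ s) ^ (-β) + (W₁ s) ^ (-β)) + G₂ s) := ⟨_, rfl⟩
  have hDd : ∀ s, s₀ ≤ s → HasDerivAt D (d s) s := by
    intro s hs
    rw [hDdef, hddef]
    exact (heq₁ s hs).sub (heq₂ s hs)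
  obtain ⟨ε, hεdef⟩ : ∃ ε : ℝ, ε = D s₁ - M * Real.exp (-s₁ * β) := ⟨_, rfl⟩
  have hε : 0 < ε := by rw [hεdef, hDdef]; simp only [hMdef]; exact sub_pos.mpr hbig
  obtain ⟨L, hLdef⟩ : ∃ L : ℝ, L = M * Real.exp (-s₁ * β) + ε / 2 := ⟨_, rfl⟩
  have hB0 : 0 ≤ M * Real.exp (-s₁ * β) := mul_nonneg hM (Real.exp_pos _).le
  have hL0 : 0 < L := by
    have := half_pos hε; linarith
  have hBanti : ∀ s, s₁ ≤ s → M * Real.exp (-s * β) ≤ M * Real.exp (-s₁ * β) := by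
    intro s hs
    apply mul_le_mul_of_nonneg_left _ hM
    exact Real.exp_le_exp.mpr (by nlinarith)
  -- derivative lower bound when D s ≥ L
  have key1 : ∀ s, s₁ ≤ s → L ≤ D s → ε / 2 ≤ d s := by
    intro s hs hDs
    have hs0 : s₀ ≤ s := le_trans hs₁ hs
    obtain ⟨hW1, hW2⟩ := hbd s hs0
    have hW2pos : 0 < W₂ s := lt_of_lt_of_le hc hW2.1
    have hW21 : W₂ s ≤ W₁ s := by
      have : 0 < D s := lt_of_lt_of_le hL0 hDs
      simp only [hDdef] at this; linarith
    have hpow : (W₁ s) ^ (-β) ≤ (W₂ s) ^ (-β) :=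
      Real.rpow_le_rpow_of_nonpos hW2pos hW21 (by linarith)
    have hGb := hG s hs0
    have hB := hBanti s hs
    have h1 : -(|G₁ s| + |G₂ s|) ≤ G₁ s - G₂ s := by
      have := neg_abs_le (G₁ s); have := le_abs_self (G₂ s); linarith
    have hβ1 : (0:ℝ) ≤ β + 1 := by linarith
    have hds : d s = D s + 3 * (β + 1) * ((W₂ s) ^ (-β) - (W₁ s) ^ (-β)) + (G₁ s - G₂ s) := by
      simp only [hddef, hDdef]; ring
    have hnn : 0 ≤ 3 * (β + 1) * ((W₂ s) ^ (-β) - (W₁ s) ^ (-β)) :=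
      mul_nonneg (by linarith) (sub_nonneg.mpr hpow)
    rw [hds]
    simp only [hLdef, hMdef] at hDs hGb hB ⊢
    linarith
  -- continuity of D on [s₀, ∞)
  have hDcont : ContinuousOn D (Set.Ici s₀) := fun t ht =>
    ((hDd t ht).continuousAt).continuousWithinAt
  -- monotonicity tool
  have mono : ∀ a b : ℝ, s₁ ≤ a → a ≤ b → (∀ t, a < t → t < b → L ≤ D t) →
      D a + ε / 2 * (b - a) ≤ D b := by
    intro a b ha hab hmid
    set f : ℝ → ℝ := fun t => D t - ε / 2 * t with hfdef
    have hfd : ∀ t ∈ Set.Icc a b, HasDerivAt f (d t - ε / 2) t := by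
      intro t ht
      have ht0 : s₀ ≤ t := le_trans (le_trans hs₁ ha) ht.1
      have h2 : HasDerivAt (fun t : ℝ => ε / 2 * t) (ε / 2) t := by
        simpa using (hasDerivAt_id t).const_mul (ε / 2)
      exact (hDd t ht0).sub h2
    have hmono : MonotoneOn f (Set.Icc a b) := by
      apply monotoneOn_of_deriv_nonneg (convex_Icc a b)
      · intro t ht; exact (hfd t ht).continuousAt.continuousWithinAt
      · intro t ht
        rw [interior_Icc] at ht
        exact (hfd t ⟨ht.1.le, ht.2.le⟩).differentiableAt.differentiableWithinAt
      · intro t ht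
        rw [interior_Icc] at ht
        rw [(hfd t ⟨ht.1.le, ht.2.le⟩).deriv]
        have hLt : L ≤ D t := hmid t ht.1 ht.2
        have := key1 t (le_trans ha ht.1.le) hLt
        linarith
    have h := hmono ⟨le_refl a, hab⟩ ⟨hab, le_refl b⟩ hab
    simp only [hfdef] at h
    linarith [h]
  -- extended continuous version of D
  obtain ⟨E, hEdef⟩ : ∃ E : ℝ → ℝ, E = fun t => D (max t s₁) := ⟨_, rfl⟩
  have hEcont : Continuous E := by
    rw [hEdef]
    apply hDcont.comp_continuous (continuous_id.max continuous_const)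
    intro t; exact le_trans hs₁ (le_max_right t s₁)
  obtain ⟨T, hTdef⟩ : ∃ T : ℝ, T = s₁ + (2 * (C - c) + 2) / ε := ⟨_, rfl⟩
  have hCc : 0 ≤ C - c := by linarith
  have hT : s₁ ≤ T := by
    have h2 : 0 < (2 * (C - c) + 2) / ε := by positivity
    rw [hTdef]; linarith
  obtain ⟨bad, hbaddef⟩ : ∃ bad : Set ℝ, bad = Set.Icc s₁ T ∩ {t | E t ≤ L} := ⟨_, rfl⟩
  subst hbaddef
  have hDs₁ : D s₁ = M * Real.exp (-s₁ * β) + ε := by rw [hεdef]; ring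
  clear hbig
  have hbadempty : ∀ t, t ∈ Set.Icc s₁ T → L < D t := by
    by_contra hne
    push_neg at hne
    obtain ⟨t₁, ht₁, ht₁L⟩ := hne
    have hbadne : (Set.Icc s₁ T ∩ {t | E t ≤ L}).Nonempty := ⟨t₁, ht₁, by simp only [hEdef, Set.mem_setOf_eq, max_eq_left ht₁.1]; exact ht₁L⟩
    have hbddbelow : BddBelow (Set.Icc s₁ T ∩ {t | E t ≤ L}) := (bddBelow_Icc).mono Set.inter_subset_left
    have hclosed : IsClosed (Set.Icc s₁ T ∩ {t | E t ≤ L}) :=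
      isClosed_Icc.inter (isClosed_le hEcont continuous_const)
    obtain ⟨t₀, ht₀def⟩ : ∃ t₀ : ℝ, t₀ = sInf (Set.Icc s₁ T ∩ {t | E t ≤ L}) := ⟨_, rfl⟩
    have ht₀mem : t₀ ∈ Set.Icc s₁ T ∩ {t | E t ≤ L} := ht₀def ▸ hclosed.csInf_mem hbadne hbddbelow
    obtain ⟨ht₀Icc, ht₀L⟩ := ht₀mem
    have hEt₀ : E t₀ = D t₀ := by simp only [hEdef, max_eq_left ht₀Icc.1]
    rw [Set.mem_setOf_eq, hEt₀] at ht₀L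
    have ht₀gt : s₁ < t₀ := by
      rcases lt_or_eq_of_le ht₀Icc.1 with h | h
      · exact h
      · exfalso; rw [← h] at ht₀L; rw [hDs₁] at ht₀L
        simp only [hLdef] at ht₀L; linarith [half_pos hε]
    have hmid : ∀ t, s₁ < t → t < t₀ → L ≤ D t := by
      intro t hts htt
      have htbad : t ∉ Set.Icc s₁ T ∩ {t | E t ≤ L} := fun hmem => absurd (csInf_le hbddbelow hmem) (not_le.mpr (ht₀def ▸ htt))
      have htIcc : t ∈ Set.Icc s₁ T := ⟨hts.le, le_trans htt.le ht₀Icc.2⟩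
      by_contra hLe
      push_neg at hLe
      exact htbad ⟨htIcc, by simp only [hEdef, Set.mem_setOf_eq, max_eq_left hts.le]; linarith⟩
    have := mono s₁ t₀ le_rfl ht₀gt.le hmid
    have hnn : 0 ≤ ε / 2 * (t₀ - s₁) := mul_nonneg (half_pos hε).le (by linarith)
    rw [hDs₁] at this
    simp only [hLdef] at ht₀L
    linarith [half_pos hε]
  have hfinal := mono s₁ T le_rfl hT (fun t h1 h2 => (hbadempty t ⟨h1.le, h2.le⟩).le)
  have hval : ε / 2 * (T - s₁) = (C - c) + 1 := by
    simp only [hTdef]; field_simp; ring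
  rw [hDs₁] at hfinal
  have hT0 : s₀ ≤ T := le_trans hs₁ hT
  obtain ⟨hW1T, hW2T⟩ := hbd T hT0
  have hDT : D T ≤ C - c := by
    simp only [hDdef]; linarith [hW1T.2, hW2T.1]
  rw [hval] at hfinal
  linarith

theorem stmt16 (β η R c C s₀ : ℝ) (hβ : 0 < β) (hη : 0 ≤ η) (hR : 0 < R)
    (hc : 0 < c) (hcC : c ≤ C)
    (W₁ W₂ G₁ G₂ : ℝ → ℝ)
    (hbd : ∀ s, s₀ ≤ s → W₁ s ∈ Set.Icc c C ∧ W₂ s ∈ Set.Icc c C)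
    (heq₁ : ∀ s, s₀ ≤ s → HasDerivAt W₁
      (W₁ s + (β + 1) * (-2 * (W₁ s) ^ (-β) + (W₂ s) ^ (-β)) + G₁ s) s)
    (heq₂ : ∀ s, s₀ ≤ s → HasDerivAt W₂
      (W₂ s + (β + 1) * (-2 * (W₂ s) ^ (-β) + (W₁ s) ^ (-β)) + G₂ s) s)
    (hG : ∀ s, s₀ ≤ s → |G₁ s| + |G₂ s| ≤ (β + 1) * R ^ β * η * Real.exp (-s * β)) :
    ∀ s, s₀ ≤ s → |W₁ s - W₂ s| ≤ (β + 1) * R ^ β * η * Real.exp (-s * β) := by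
  intro s hs
  rw [abs_sub_le_iff]
  constructor
  · exact key16 β η R c C s₀ hβ hη hR hc hcC W₁ W₂ G₁ G₂ hbd heq₁ heq₂ hG s hs
  · exact key16 β η R c C s₀ hβ hη hR hc hcC W₂ W₁ G₂ G₁
      (fun s hs => ⟨(hbd s hs).2, (hbd s hs).1⟩) heq₂ heq₁
      (fun s hs => by rw [add_comm]; exact hG s hs) s hs
end
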